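/- Let $G$ be a finite group and $p$ a prime with $p > |G|!$. If $G'$ is a group fitting in a short exact sequence $1 \to G \to G' \to (\mathbb{Z}/p^r)^b \to 1$, then $G' \cong G \times (\mathbb{Z}/p^r)^b$. -/
import Mathlib


/-- If `G` is a finite group, `p` a prime with `p > |G|!`, and `G'` sits in a
short exact sequence `1 → G → G' → (ℤ/pʳ)ᵇ → 1`, then `G' ≅ G × (ℤ/pʳ)ᵇ`. -/
theorem stmt_1 {G G' : Type*} [Group G] [Finite G] [Group G']
    (p : ℕ) (hp : p.Prime) (hpG : (Nat.card G).factorial < p) (r b : ℕ)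
    (ι : G →* G') (π : G' →* (Fin b → Multiplicative (ZMod (p ^ r))))
    (hι : Function.Injective ι) (hπ : Function.Surjective π)
    (hexact : ι.range = π.ker) :
    Nonempty (G' ≃* G × (Fin b → Multiplicative (ZMod (p ^ r)))) := by
  classical
  set Q := Fin b → Multiplicative (ZMod (p ^ r)) with hQ
  -- basic facts
  have eG : G ≃* π.ker := (MonoidHom.ofInjective hι).trans (MulEquiv.subgroupCongr hexact)
  have hcardN : Nat.card π.ker = Nat.card G := (Nat.card_congr eG.toEquiv).symm
  haveI : Finite π.ker := Finite.of_equiv G eG.toEquiv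
  have hcardG_pos : 0 < Nat.card G := Nat.card_pos
  have hGlt : Nat.card G < p := lt_of_le_of_lt (Nat.self_le_factorial _) hpG
  have hpndvdG : ¬ p ∣ Nat.card G := fun h => absurd (Nat.le_of_dvd hcardG_pos h) (not_le.mpr hGlt)
  have hpndvdF : ¬ p ∣ (Nat.card G).factorial :=
    fun h => absurd (Nat.le_of_dvd (Nat.factorial_pos _) h) (not_le.mpr hpG)
  -- the index of π.ker
  haveI : NeZero (p ^ r) := ⟨pow_ne_zero r hp.pos.ne'⟩
  have hcardQ : Nat.card Q = p ^ (r * b) := by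
    rw [hQ, Nat.card_fun]
    simp [Nat.card_zmod, ← pow_mul]
  have hindexN : π.ker.index = p ^ (r * b) := by
    rw [Subgroup.index_eq_card,
      Nat.card_congr (QuotientGroup.quotientKerEquivOfSurjective π hπ).toEquiv, hcardQ]
  have hco : (Nat.card G).Coprime (p ^ (r * b)) :=
    ((hp.coprime_iff_not_dvd.mpr hpndvdG).symm).pow_right _
  -- conjugation action on π.ker
  set f : G' →* MulAut π.ker := MulAut.conjNormal with hf
  set K := f.ker with hK
  -- K.index divides (card G)!
  have hKidx : K.index ∣ (Nat.card G).factorial := by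
    rw [hK, Subgroup.index_ker f]
    have h1 : Nat.card f.range ∣ Nat.card (MulAut π.ker) := Subgroup.card_subgroup_dvd_card _
    have h2 : Nat.card (MulAut π.ker) ∣ Nat.card (Equiv.Perm π.ker) := by
      exact Subgroup.card_dvd_of_injective (MulAut.toPerm _)
        (fun a b hab => MulEquiv.toEquiv_injective hab)
    have h3 : Nat.card (Equiv.Perm π.ker) = (Nat.card π.ker).factorial := by
      haveI := Fintype.ofFinite (π.ker : Type _)
      rw [Nat.card_eq_fintype_card, Nat.card_eq_fintype_card, Fintype.card_perm]
    rw [← hcardN]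
    exact h1.trans (h3 ▸ h2)
  -- π.ker ⊔ K = ⊤
  have hsuptop : π.ker ⊔ K = ⊤ := by
    have hd1 : (π.ker ⊔ K).index ∣ p ^ (r * b) :=
      hindexN ▸ Subgroup.index_dvd_of_le le_sup_left
    have hd2 : (π.ker ⊔ K).index ∣ (Nat.card G).factorial :=
      (Subgroup.index_dvd_of_le le_sup_right).trans hKidx
    have hcop : ((p : ℕ) ^ (r * b)).Coprime ((Nat.card G).factorial) :=
      (hp.coprime_iff_not_dvd.mpr hpndvdF).pow_left _
    have : (π.ker ⊔ K).index ∣ 1 := hcop ▸ Nat.dvd_gcd hd1 hd2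
    exact Subgroup.index_eq_one.mp (Nat.dvd_one.mp this)
  -- Schur-Zassenhaus inside K
  have hcard_sub : Nat.card (π.ker.subgroupOf K) ∣ Nat.card G := by
    have h1 : Nat.card (π.ker.subgroupOf K)
        = Nat.card ((π.ker.subgroupOf K).map K.subtype) :=
      Nat.card_congr ((π.ker.subgroupOf K).equivMapOfInjective K.subtype
        K.subtype_injective).toEquiv
    rw [h1, Subgroup.subgroupOf_map_subtype, ← hcardN]
    exact Subgroup.card_dvd_of_le inf_le_left
  have hidx_sub : (π.ker.subgroupOf K).index ∣ p ^ (r * b) := by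
    have : π.ker.relIndex K ∣ π.ker.index := Subgroup.relIndex_dvd_index_of_normal _ _
    rwa [hindexN] at this
  have hco_sub : (Nat.card (π.ker.subgroupOf K)).Coprime (π.ker.subgroupOf K).index :=
    Nat.Coprime.coprime_dvd_right hidx_sub (Nat.Coprime.coprime_dvd_left hcard_sub hco)
  obtain ⟨H₀, hH₀⟩ := Subgroup.exists_right_complement'_of_coprime hco_sub
  set H := H₀.map K.subtype with hH
  have hHK : H ≤ K := Subgroup.map_subtype_le _
  -- elements of H commute with elements of π.ker
  have hcomm : ∀ h : G', h ∈ K → ∀ n : G', n ∈ π.ker → h * n = n * h := by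
    intro h hh n hn
    have h1 : f h = 1 := hh
    have h2 : ((f h) ⟨n, hn⟩ : G') = h * n * h⁻¹ := MulAut.conjNormal_apply h ⟨n, hn⟩
    rw [h1] at h2
    simp only [MulAut.one_apply] at h2
    calc h * n = (h * n * h⁻¹) * h := by group
    _ = n * h := by rw [← h2]
  -- disjointness
  have hdisj : ∀ x : G', x ∈ π.ker → x ∈ H → x = 1 := by
    intro x hx hxH
    rcases hxH with ⟨y, hy, rfl⟩
    have hy' : y ∈ π.ker.subgroupOf K := by
      simpa [Subgroup.mem_subgroupOf] using hx
    have : y ∈ (π.ker.subgroupOf K) ⊓ H₀ := ⟨hy', hy⟩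
    rw [hH₀.disjoint.eq_bot] at this
    have hy1 : y = 1 := Subgroup.mem_bot.mp this
    simp [hy1]
  -- sup with π.ker is everything
  have hsupH : π.ker ⊔ H = ⊤ := by
    have h2 : (π.ker ⊓ K) ⊔ H = K := by
      rw [hH, ← Subgroup.subgroupOf_map_subtype, ← Subgroup.map_sup, hH₀.sup_eq_top,
        ← MonoidHom.range_eq_map, Subgroup.range_subtype]
    have h3 : K ≤ π.ker ⊔ H := by
      rw [← h2]
      exact sup_le (inf_le_left.trans le_sup_left) le_sup_right
    rw [eq_top_iff, ← hsuptop]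
    exact sup_le le_sup_left h3
  -- the multiplication map π.ker × H → G'
  set m : π.ker × H →* G' :=
    { toFun := fun x => (x.1 : G') * (x.2 : G')
      map_one' := by simp
      map_mul' := by
        rintro ⟨⟨n₁, hn₁⟩, ⟨h₁, hh₁⟩⟩ ⟨⟨n₂, hn₂⟩, ⟨h₂, hh₂⟩⟩
        have hc := hcomm h₁ (hHK hh₁) n₂ hn₂
        show (n₁ * n₂) * (h₁ * h₂) = (n₁ * h₁) * (n₂ * h₂)
        rw [mul_assoc n₁, ← mul_assoc n₂, ← hc]
        simp [mul_assoc] } with hm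
  have hminj : Function.Injective m := by
    rw [← m.ker_eq_bot_iff, Subgroup.eq_bot_iff_forall]
    rintro ⟨⟨n, hn⟩, ⟨h, hh⟩⟩ hx
    have hx' : n * h = 1 := hx
    have hn' : n = h⁻¹ := eq_inv_of_mul_eq_one_left hx'
    have hhk : h⁻¹ ∈ π.ker := hn' ▸ hn
    have : h⁻¹ = 1 := hdisj h⁻¹ hhk (inv_mem hh)
    have hh1 : h = 1 := by simpa using congrArg (·⁻¹) this
    have hn1 : n = 1 := by rw [hn', hh1, inv_one]
    exact Prod.ext (Subtype.ext hn1) (Subtype.ext hh1)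
  have hmsurj : Function.Surjective m := by
    intro g
    have hg : g ∈ ((π.ker ⊔ H : Subgroup G') : Set G') := by rw [hsupH]; trivial
    rw [Subgroup.normal_mul] at hg
    rcases hg with ⟨n, hn, h, hh, rfl⟩
    exact ⟨(⟨⟨n, hn⟩, ⟨h, hh⟩⟩ : π.ker × H), rfl⟩
  have em : π.ker × H ≃* G' := MulEquiv.ofBijective m ⟨hminj, hmsurj⟩
  -- H ≃* Q via π
  set πH : H →* Q := π.comp H.subtype with hπH
  have hπHinj : Function.Injective πH := by
    rw [← πH.ker_eq_bot_iff, Subgroup.eq_bot_iff_forall]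
    rintro ⟨h, hh⟩ hx
    have : h ∈ π.ker := hx
    have h1 : h = 1 := hdisj h this hh
    exact Subtype.ext h1
  have hπHsurj : Function.Surjective πH := by
    intro q
    obtain ⟨g, rfl⟩ := hπ q
    obtain ⟨⟨⟨n, hn⟩, ⟨h, hh⟩⟩, rfl⟩ := hmsurj g
    refine ⟨⟨h, hh⟩, ?_⟩
    have : π n = 1 := hn
    simp [hπH, hm, map_mul, this]
  have eH : H ≃* Q := MulEquiv.ofBijective πH ⟨hπHinj, hπHsurj⟩
  exact ⟨em.symm.trans (MulEquiv.prodCongr eG.symm eH)⟩
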